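/- Let W be a real vector space and t : W × W → ℝ a symmetric positive semidefinite bilinear form. Let V ⊆ W be a finite-dimensional linear subspace, N a norm on V, s : V × V → ℝ a symmetric positive semidefinite bilinear form, τ > 0, and c > 0 a constant with t(v,v) + τ·s(v,v) ≥ c·N(v)² for all v ∈ V. For r ∈ W let π(r) ∈ V denote the unique element with t(π(r),q) + τ·s(π(r),q) = t(r,q) for all q ∈ V. Fix e ∈ V with t(e,e) > 0 and s(e,q) = 0 for all q ∈ V. If g ∈ W and x ∈ V satisfy t(x,q) + τ·s(x,q) = −t(g,q) for all q ∈ V with t(q,e) = 0, then there exists λ ∈ ℝ such that x = −π(g) + λ·e. -/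

import Mathlib

/-- Discrete mass conservation (case Γ_p = ∅, pure flux boundary conditions):
if `x ∈ V` satisfies the stabilised conservation equation
`t(x,q) + τ·s(x,q) = −t(g,q)` for all zero-mean `q ∈ V` (i.e. `t(q,e) = 0`),
where `e ∈ V` has `t(e,e) > 0` and `s(e,·) = 0`, then `x = −π(g) + λ·e`
for some constant `λ ∈ ℝ`. -/
theorem discrete_mass_conservation_pure_flux
    {W : Type*} [AddCommGroup W] [Module ℝ W]
    (t : W →ₗ[ℝ] W →ₗ[ℝ] ℝ)
    (ht_symm : ∀ x y : W, t x y = t y x) (ht_pos : ∀ x : W, 0 ≤ t x x)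
    (V : Submodule ℝ W) [FiniteDimensional ℝ V]
    (N : V → ℝ)
    (hN_nonneg : ∀ v : V, 0 ≤ N v)
    (hN_def : ∀ v : V, N v = 0 ↔ v = 0)
    (hN_smul : ∀ (a : ℝ) (v : V), N (a • v) = |a| * N v)
    (hN_add : ∀ v w : V, N (v + w) ≤ N v + N w)
    (s : V →ₗ[ℝ] V →ₗ[ℝ] ℝ)
    (hs_symm : ∀ x y : V, s x y = s y x) (hs_pos : ∀ x : V, 0 ≤ s x x)
    (τ c : ℝ) (hτ : 0 < τ) (hc : 0 < c)
    (hcoer : ∀ v : V, c * N v ^ 2 ≤ t v v + τ * s v v)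
    (π : W → V)
    (hπ : ∀ (r : W) (q : V), t (π r : W) (q : W) + τ * s (π r) q = t r (q : W))
    (e : V) (he : 0 < t (e : W) (e : W)) (hse : ∀ q : V, s e q = 0)
    (g : W) (x : V)
    (hx : ∀ q : V, t (q : W) (e : W) = 0 →
      t (x : W) (q : W) + τ * s x q = -(t g (q : W))) :
    ∃ l : ℝ, x = -π g + l • e := by
  set y : V := x + π g with hy
  set l : ℝ := t (y : W) (e : W) / t (e : W) (e : W) with hl
  set z : V := y - l • e with hz
  have hze : t (z : W) (e : W) = 0 := by
    have hzc : (z : W) = (y : W) - l • (e : W) := by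
      simp [hz]
    rw [hzc]
    simp only [map_sub, map_smul, LinearMap.sub_apply, LinearMap.smul_apply,
      smul_eq_mul]
    rw [hl]
    field_simp
    ring
  have hB : ∀ q : V, t (q : W) (e : W) = 0 → t (y : W) (q : W) + τ * s y q = 0 := by
    intro q hq
    have h1 := hx q hq
    have h2 := hπ g q
    have hyc : (y : W) = (x : W) + ((π g : V) : W) := by simp [hy]
    have hts : t (y : W) (q : W) = t (x : W) (q : W) + t ((π g : V) : W) (q : W) := by
      rw [hyc]; simp
    have hss : s y q = s x q + s (π g) q := by rw [hy]; simp
    rw [hts, hss]; linarith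
  have hBz := hB z hze
  have hte : t (e : W) (z : W) = 0 := by rw [ht_symm]; exact hze
  have hsez : s e z = 0 := hse z
  have hyz : y = z + l • e := by rw [hz]; abel
  have hBzz : t (z : W) (z : W) + τ * s z z = 0 := by
    have hyc : (y : W) = (z : W) + l • (e : W) := by rw [hyz]; simp
    have h1 : t (y : W) (z : W) = t (z : W) (z : W) + l * t (e : W) (z : W) := by
      rw [hyc]; simp
    have h2 : s y z = s z z + l * s e z := by rw [hyz]; simp
    rw [h1, h2, hte, hsez] at hBz
    linarith
  have hz0 : z = 0 := by
    have h3 := hcoer z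
    have h4 : N z ^ 2 ≤ 0 := by nlinarith
    have h5 : N z ^ 2 = 0 := le_antisymm h4 (sq_nonneg _)
    have hN : N z = 0 := by
      have := sq_eq_zero_iff.mp h5
      exact this
    exact (hN_def z).mp hN
  refine ⟨l, ?_⟩
  have hy2 : y = l • e := by
    have := hyz
    rw [hz0] at this
    simpa using this
  rw [hy] at hy2
  rw [eq_sub_of_add_eq hy2]
  abel
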